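/- arXiv:2103.02390 — 2 statements merged into one kernel-verified Lean document; each statement's English description precedes it below -/
import Mathlib

section
/- Let (X,d,μ) be a doubling quasi-metric measure space with μ(X) = ∞ and γ > 0. There is C > 0 such that for any x₁ ∈ X and r, R > 0, ∫_{{x : d(x₁,x) ≥ R}} (1/(V_r(x₁)+V(x₁,x))) · (r/(r+d(x₁,x)))^γ dμ(x) ≤ C (r/(r+R))^γ', for any γ' ∈ (0,γ) with γ - γ' > ω. -/
open MeasureTheory ENNReal

/-- On a doubling quasi-metric measure space with `μ(X) = ∞`, all
balls of positive finite measure, and `γ > 0`: for any `γ' ∈ (0,γ)` with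
`γ - γ' > ω`, there is `C > 0` such that for all `x₁ ∈ X` and `r, R > 0`,
`∫_{d(x₁,x) ≥ R} (V_r(x₁)+V(x₁,x))⁻¹ (r/(r+d(x₁,x)))^γ dμ(x) ≤ C (r/(r+R))^γ'`. -/
theorem integral_tail_kernel_bound {X : Type*} [MeasurableSpace X]
    (d : X → X → ℝ) (A₀ : ℝ) (hA₀ : 1 ≤ A₀)
    (hd_nonneg : ∀ x y, 0 ≤ d x y)
    (hd_symm : ∀ x y, d x y = d y x)
    (hd_eq : ∀ x y, d x y = 0 ↔ x = y)
    (hd_tri : ∀ x y z, d x z ≤ A₀ * (d x y + d y z))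
    (hd_meas : Measurable fun p : X × X => d p.1 p.2)
    (μ : Measure X) (Cμ : ℝ) (hCμ : 1 ≤ Cμ)
    (hdoub : ∀ x r, 0 < r →
      μ {y | d x y < 2 * r} ≤ ENNReal.ofReal Cμ * μ {y | d x y < r})
    (hball : ∀ (x : X) (r : ℝ), 0 < r →
      0 < μ {y | d x y < r} ∧ μ {y | d x y < r} < ⊤)
    (hinf : μ Set.univ = ⊤)
    (γ : ℝ) (hγ : 0 < γ) :
    ∀ γ' : ℝ, 0 < γ' → γ' < γ → Real.logb 2 Cμ < γ - γ' →
      ∃ C : ℝ, 0 < C ∧ ∀ (x₁ : X) (r R : ℝ), 0 < r → 0 < R →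
        ∫⁻ x in {x | R ≤ d x₁ x},
            (μ {z | d x₁ z < r} + μ {z | d x₁ z < d x₁ x})⁻¹ *
              ENNReal.ofReal ((r / (r + d x₁ x)) ^ γ) ∂μ ≤
          ENNReal.ofReal (C * (r / (r + R)) ^ γ') := by
  intro γ' hγ'0 hγ'γ hω
  have hCμ0 : (0:ℝ) < Cμ := by linarith
  set δ : ℝ := γ - γ' with hδdef
  have hδ0 : 0 < δ := by
    have := Real.logb_nonneg (by norm_num : (1:ℝ) < 2) hCμ
    linarith
  set qr : ℝ := (2:ℝ) ^ (-δ) with hqr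
  have hqr0 : 0 < qr := Real.rpow_pos_of_pos (by norm_num) _
  set s : ℝ := Cμ * qr with hs
  have hs0 : 0 ≤ s := by positivity
  have hs1 : s < 1 := by
    have h1 : Cμ < (2:ℝ) ^ δ :=
      (Real.logb_lt_iff_lt_rpow (by norm_num) hCμ0).mp hω
    have h2 : (2:ℝ) ^ δ * qr = 1 := by
      rw [hqr, ← Real.rpow_add (by norm_num)]
      simp
    calc s < (2:ℝ) ^ δ * qr := by
            rw [hs]; exact mul_lt_mul_of_pos_right h1 hqr0
      _ = 1 := h2
  set C : ℝ := (2:ℝ) ^ γ' + Cμ / (1 - s) with hC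
  have hC0 : 0 < C := by
    have : 0 < Cμ / (1 - s) := div_pos hCμ0 (by linarith)
    have : (0:ℝ) < (2:ℝ) ^ γ' := Real.rpow_pos_of_pos (by norm_num) _
    positivity
  refine ⟨C, hC0, ?_⟩
  intro x₁ r R hr hR
  have hdm : Measurable fun x => d x₁ x :=
    hd_meas.comp (measurable_const.prodMk measurable_id)
  set Vr := μ {z | d x₁ z < r} with hVr
  have hVr0 : Vr ≠ 0 := (hball x₁ r hr).1.ne'
  have hVrtop : Vr ≠ ⊤ := (hball x₁ r hr).2.ne
  set t : ℝ := r / (r + R) with ht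
  have ht0 : 0 < t := by positivity
  -- doubling iterate
  have hiter : ∀ k : ℕ, μ {z | d x₁ z < 2 ^ k * r} ≤ (ENNReal.ofReal Cμ) ^ k * Vr := by
    intro k
    induction k with
    | zero => simp [hVr]
    | succ k ih =>
      have h2k : (0:ℝ) < 2 ^ k * r := by positivity
      have := hdoub x₁ (2 ^ k * r) h2k
      have heq : {y | d x₁ y < 2 * (2 ^ k * r)} = {y | d x₁ y < 2 ^ (k+1) * r} := by
        ext y; simp [pow_succ]; ring_nf
      rw [heq] at this
      calc μ {z | d x₁ z < 2 ^ (k+1) * r}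
          ≤ ENNReal.ofReal Cμ * μ {y | d x₁ y < 2 ^ k * r} := this
        _ ≤ ENNReal.ofReal Cμ * ((ENNReal.ofReal Cμ) ^ k * Vr) := by
            exact mul_le_mul_right ih _
        _ = (ENNReal.ofReal Cμ) ^ (k+1) * Vr := by ring
  -- sets
  set S0 : Set X := {x | R ≤ d x₁ x ∧ d x₁ x < r} with hS0def
  set S : ℕ → Set X := fun k => {x | R ≤ d x₁ x ∧ 2 ^ k * r ≤ d x₁ x ∧ d x₁ x < 2 ^ (k+1) * r}
    with hSdef
  have hcov : {x | R ≤ d x₁ x} ⊆ S0 ∪ ⋃ k, S k := by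
    intro x hx
    simp only [Set.mem_setOf_eq] at hx
    by_cases hxr : d x₁ x < r
    · exact Or.inl ⟨hx, hxr⟩
    · push_neg at hxr
      right
      have h1 : (1:ℝ) ≤ d x₁ x / r := (one_le_div hr).mpr hxr
      obtain ⟨k, hk1, hk2⟩ := exists_nat_pow_near h1 (by norm_num : (1:ℝ) < 2)
      refine Set.mem_iUnion.mpr ⟨k, hx, ?_, ?_⟩
      · calc (2:ℝ) ^ k * r ≤ (d x₁ x / r) * r := by
              exact mul_le_mul_of_nonneg_right hk1 hr.le
          _ = d x₁ x := by field_simp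
      · calc d x₁ x = (d x₁ x / r) * r := by field_simp
          _ < 2 ^ (k+1) * r := mul_lt_mul_of_pos_right hk2 hr
  -- pointwise kernel bounds
  set f : X → ℝ≥0∞ := fun x =>
    (μ {z | d x₁ z < r} + μ {z | d x₁ z < d x₁ x})⁻¹ *
      ENNReal.ofReal ((r / (r + d x₁ x)) ^ γ) with hf
  have hinv_le : ∀ x : X, (μ {z | d x₁ z < r} + μ {z | d x₁ z < d x₁ x})⁻¹ ≤ Vr⁻¹ := by
    intro x
    exact ENNReal.inv_le_inv.mpr le_self_add
  -- bound on S0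
  have hS0meas : MeasurableSet S0 :=
    (hdm measurableSet_Ici).inter (hdm measurableSet_Iio)
  have hS0bound : ∫⁻ x in S0, f x ∂μ ≤ ENNReal.ofReal ((2:ℝ) ^ γ' * t ^ γ') := by
    rcases le_or_gt r R with hrR | hrR
    · have : S0 = ∅ := by
        ext x; simp only [hS0def, Set.mem_setOf_eq, Set.mem_empty_iff_false, iff_false]
        rintro ⟨h1, h2⟩; linarith
      rw [this]; simp
    · have hpt : ∀ x ∈ S0, f x ≤ Vr⁻¹ := by
        intro x hx
        have h1 : ENNReal.ofReal ((r / (r + d x₁ x)) ^ γ) ≤ 1 := by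
          rw [show (1:ℝ≥0∞) = ENNReal.ofReal 1 by simp]
          apply ENNReal.ofReal_le_ofReal
          have hdx := hd_nonneg x₁ x
          apply Real.rpow_le_one (div_nonneg hr.le (by linarith)) _ hγ.le
          rw [div_le_one (by have := hd_nonneg x₁ x; linarith)]
          have := hd_nonneg x₁ x; linarith
        calc f x ≤ Vr⁻¹ * 1 := mul_le_mul' (hinv_le x) h1
          _ = Vr⁻¹ := mul_one _
      calc ∫⁻ x in S0, f x ∂μ ≤ ∫⁻ _ in S0, Vr⁻¹ ∂μ := setLIntegral_mono' hS0meas hpt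
        _ = Vr⁻¹ * μ S0 := setLIntegral_const _ _
        _ ≤ Vr⁻¹ * Vr := by
            apply mul_le_mul_right
            apply measure_mono
            intro x hx; exact hx.2
        _ = 1 := ENNReal.inv_mul_cancel hVr0 hVrtop
        _ ≤ ENNReal.ofReal ((2:ℝ) ^ γ' * t ^ γ') := by
            rw [show (1:ℝ≥0∞) = ENNReal.ofReal 1 by simp]
            apply ENNReal.ofReal_le_ofReal
            have h2 : (2:ℝ)⁻¹ ≤ t := by
              rw [ht, le_div_iff₀ (by linarith)]
              linarith
            calc (1:ℝ) = (2:ℝ) ^ γ' * ((2:ℝ)⁻¹) ^ γ' := by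
                  rw [← Real.mul_rpow (by norm_num) (by norm_num)]
                  norm_num
              _ ≤ (2:ℝ) ^ γ' * t ^ γ' := by
                  apply mul_le_mul_of_nonneg_left _ (by positivity)
                  exact Real.rpow_le_rpow (by norm_num) h2 hγ'0.le
    -- annuli bounds
  have hSmeas : ∀ k, MeasurableSet (S k) := by
    intro k
    have : S k = (fun x => d x₁ x) ⁻¹' (Set.Ici R) ∩
        ((fun x => d x₁ x) ⁻¹' (Set.Ici (2 ^ k * r)) ∩
         (fun x => d x₁ x) ⁻¹' (Set.Iio (2 ^ (k+1) * r))) := by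
      ext x; simp [hSdef, and_assoc]
    rw [this]
    exact (hdm measurableSet_Ici).inter
      ((hdm measurableSet_Ici).inter (hdm measurableSet_Iio))
  have hSbound : ∀ k : ℕ, ∫⁻ x in S k, f x ∂μ ≤
      ENNReal.ofReal (Cμ * s ^ k * t ^ γ') := by
    intro k
    have hpt : ∀ x ∈ S k, f x ≤ Vr⁻¹ * ENNReal.ofReal (t ^ γ' * qr ^ k) := by
      intro x hx
      obtain ⟨hxR, hxk, _⟩ := hx
      have hdx : 0 ≤ d x₁ x := hd_nonneg x₁ x
      have hrd : 0 < r + d x₁ x := by linarith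
      have hbase0 : 0 < r / (r + d x₁ x) := by positivity
      have hmain : (r / (r + d x₁ x)) ^ γ ≤ t ^ γ' * qr ^ k := by
        have hsplit : (r / (r + d x₁ x)) ^ γ
            = (r / (r + d x₁ x)) ^ γ' * (r / (r + d x₁ x)) ^ δ := by
          rw [← Real.rpow_add hbase0]
          congr 1
          rw [hδdef]; ring
        rw [hsplit]
        have h1 : (r / (r + d x₁ x)) ^ γ' ≤ t ^ γ' := by
          apply Real.rpow_le_rpow hbase0.le _ hγ'0.le
          rw [ht]
          apply div_le_div_of_nonneg_left hr.le (by linarith) (by linarith)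
        have h2 : (r / (r + d x₁ x)) ^ δ ≤ qr ^ k := by
          have hb : r / (r + d x₁ x) ≤ ((2:ℝ) ^ k)⁻¹ := by
            rw [inv_eq_one_div, div_le_div_iff₀ hrd (by positivity), one_mul]
            calc r * 2 ^ k = 2 ^ k * r := by ring
              _ ≤ d x₁ x := hxk
              _ ≤ r + d x₁ x := by linarith
          calc (r / (r + d x₁ x)) ^ δ ≤ (((2:ℝ) ^ k)⁻¹) ^ δ :=
                Real.rpow_le_rpow hbase0.le hb hδ0.le
            _ = qr ^ k := by
                rw [← Real.rpow_natCast (2:ℝ) k, ← Real.rpow_neg (by norm_num),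
                  ← Real.rpow_mul (by norm_num), hqr,
                  ← Real.rpow_natCast ((2:ℝ) ^ (-δ)) k,
                  ← Real.rpow_mul (by norm_num)]
                ring_nf
        exact mul_le_mul h1 h2 (Real.rpow_nonneg (div_nonneg hr.le hrd.le) δ)
          (by positivity)
      calc f x ≤ Vr⁻¹ * ENNReal.ofReal ((r / (r + d x₁ x)) ^ γ) :=
            mul_le_mul' (hinv_le x) le_rfl
        _ ≤ Vr⁻¹ * ENNReal.ofReal (t ^ γ' * qr ^ k) :=
            mul_le_mul' le_rfl (ENNReal.ofReal_le_ofReal hmain)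
    have hμS : μ (S k) ≤ (ENNReal.ofReal Cμ) ^ (k+1) * Vr := by
      calc μ (S k) ≤ μ {z | d x₁ z < 2 ^ (k+1) * r} := by
            apply measure_mono
            intro x hx; exact hx.2.2
        _ ≤ (ENNReal.ofReal Cμ) ^ (k+1) * Vr := hiter (k+1)
    calc ∫⁻ x in S k, f x ∂μ
        ≤ ∫⁻ _ in S k, Vr⁻¹ * ENNReal.ofReal (t ^ γ' * qr ^ k) ∂μ :=
          setLIntegral_mono' (hSmeas k) hpt
      _ = Vr⁻¹ * ENNReal.ofReal (t ^ γ' * qr ^ k) * μ (S k) := setLIntegral_const _ _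
      _ ≤ Vr⁻¹ * ENNReal.ofReal (t ^ γ' * qr ^ k) * ((ENNReal.ofReal Cμ) ^ (k+1) * Vr) :=
          mul_le_mul_right hμS _
      _ = (Vr⁻¹ * Vr) * (ENNReal.ofReal (t ^ γ' * qr ^ k) * (ENNReal.ofReal Cμ) ^ (k+1)) := by
          ring
      _ = ENNReal.ofReal (t ^ γ' * qr ^ k) * (ENNReal.ofReal Cμ) ^ (k+1) := by
          rw [ENNReal.inv_mul_cancel hVr0 hVrtop, one_mul]
      _ = ENNReal.ofReal (t ^ γ' * qr ^ k * Cμ ^ (k+1)) := by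
          rw [← ENNReal.ofReal_pow hCμ0.le, ← ENNReal.ofReal_mul (by positivity)]
      _ = ENNReal.ofReal (Cμ * s ^ k * t ^ γ') := by
          congr 1
          rw [hs, mul_pow]
          ring
  -- sum the annuli bounds
  have hsum : ∑' k : ℕ, ENNReal.ofReal (Cμ * s ^ k * t ^ γ') ≤
      ENNReal.ofReal (Cμ / (1 - s) * t ^ γ') := by
    have hnn : ∀ k : ℕ, 0 ≤ Cμ * s ^ k * t ^ γ' := by
      intro k; positivity
    have hsummable : Summable (fun k : ℕ => Cμ * s ^ k * t ^ γ') := by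
      have := summable_geometric_of_lt_one hs0 hs1
      exact (this.mul_left Cμ).mul_right _
    rw [← ENNReal.ofReal_tsum_of_nonneg hnn hsummable]
    apply ENNReal.ofReal_le_ofReal
    have : ∑' k : ℕ, Cμ * s ^ k * t ^ γ' = (Cμ * t ^ γ') * ∑' k : ℕ, s ^ k := by
      rw [← tsum_mul_left]
      congr 1; ext k; ring
    rw [this, tsum_geometric_of_lt_one hs0 hs1, div_mul_eq_mul_div, div_eq_mul_inv]
  -- put everything together
  calc ∫⁻ x in {x | R ≤ d x₁ x}, f x ∂μ
      ≤ ∫⁻ x in S0 ∪ ⋃ k, S k, f x ∂μ :=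
        lintegral_mono' (Measure.restrict_mono hcov le_rfl) le_rfl
    _ ≤ (∫⁻ x in S0, f x ∂μ) + ∫⁻ x in ⋃ k, S k, f x ∂μ := lintegral_union_le _ _ _
    _ ≤ (∫⁻ x in S0, f x ∂μ) + ∑' k, ∫⁻ x in S k, f x ∂μ :=
        add_le_add_right (lintegral_iUnion_le _ _) _
    _ ≤ ENNReal.ofReal ((2:ℝ) ^ γ' * t ^ γ') +
        ENNReal.ofReal (Cμ / (1 - s) * t ^ γ') := by
        apply add_le_add hS0bound
        exact le_trans (ENNReal.tsum_le_tsum hSbound) hsum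
    _ = ENNReal.ofReal (C * t ^ γ') := by
        rw [← ENNReal.ofReal_add (by positivity)
          (mul_nonneg (div_nonneg hCμ0.le (by linarith)) (Real.rpow_nonneg ht0.le _)), hC]
        congr 1
        ring
end

section
/- Let (X,d,μ) be a doubling quasi-metric measure space, δ ∈ (0,1), γ > 0, and θ ∈ (0,1] with θ > ω/(ω+γ) where ω is the upper dimension. Then for every k ∈ ℤ and x ∈ X, ∫_X [ (1/(V_{δ^k}(x)+V(x,y))) (δ^k/(δ^k+d(x,y)))^γ ]^θ dμ(y) ≤ C [V_{δ^k}(x)]^{1-θ}, with C independent of k and x. -/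
open MeasureTheory ENNReal

set_option maxHeartbeats 1000000 in
/-- On a doubling quasi-metric measure space with upper dimension
`ω = log₂ Cμ` and `μ(X) = ∞`: for `δ ∈ (0,1)`, `γ > 0`, and
`θ ∈ (ω/(ω+γ), 1]`, one has, uniformly in `k ∈ ℤ` and `x ∈ X`,
`∫_X [ (V_{δᵏ}(x)+V(x,y))⁻¹ (δᵏ/(δᵏ+d(x,y)))^γ ]^θ dμ(y) ≤ C ⬝ V_{δᵏ}(x)^{1-θ}`. -/
theorem kernel_rpow_integral_bound {X : Type*} [MeasurableSpace X]
    (d : X → X → ℝ) (A₀ : ℝ) (hA₀ : 1 ≤ A₀)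
    (hd_nonneg : ∀ x y, 0 ≤ d x y)
    (hd_symm : ∀ x y, d x y = d y x)
    (hd_eq : ∀ x y, d x y = 0 ↔ x = y)
    (hd_tri : ∀ x y z, d x z ≤ A₀ * (d x y + d y z))
    (hd_meas : Measurable fun p : X × X => d p.1 p.2)
    (μ : Measure X) (Cμ : ℝ) (hCμ : 1 ≤ Cμ)
    (hdoub : ∀ x r, 0 < r →
      μ {y | d x y < 2 * r} ≤ ENNReal.ofReal Cμ * μ {y | d x y < r})
    (hball : ∀ (x : X) (r : ℝ), 0 < r →
      0 < μ {y | d x y < r} ∧ μ {y | d x y < r} < ⊤)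
    (hinf : μ Set.univ = ⊤)
    (δ : ℝ) (hδ0 : 0 < δ) (hδ1 : δ < 1)
    (γ θ : ℝ) (hγ : 0 < γ) (hθ0 : 0 < θ) (hθ1 : θ ≤ 1)
    (hθ : Real.logb 2 Cμ / (Real.logb 2 Cμ + γ) < θ) :
    ∃ C : ℝ, 0 < C ∧ ∀ (k : ℤ) (x : X),
      ∫⁻ y, ((μ {z | d x z < δ ^ k} + μ {z | d x z < d x y})⁻¹ *
          ENNReal.ofReal ((δ ^ k / (δ ^ k + d x y)) ^ γ)) ^ θ ∂μ ≤
        ENNReal.ofReal C * (μ {z | d x z < δ ^ k}) ^ (1 - θ) := by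
  classical
  have hCμ0 : (0:ℝ) < Cμ := lt_of_lt_of_le one_pos hCμ
  set ω := Real.logb 2 Cμ with hωdef
  have hω0 : 0 ≤ ω := Real.logb_nonneg one_lt_two hCμ
  have hθ1' : 0 ≤ 1 - θ := by linarith
  set q : ℝ := Cμ ^ (1 - θ) * 2 ^ (-(γ * θ)) with hqdef
  have hq0 : 0 < q := mul_pos (Real.rpow_pos_of_pos hCμ0 _) (Real.rpow_pos_of_pos two_pos _)
  have hq1 : q < 1 := by
    have h2 : (2:ℝ) ^ ω = Cμ := Real.rpow_logb two_pos (by norm_num) hCμ0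
    have hωγ : ω * (1 - θ) - γ * θ < 0 := by
      have hpos : 0 < ω + γ := by linarith
      have := (div_lt_iff₀ hpos).mp hθ
      nlinarith
    calc q = 2 ^ (ω * (1-θ)) * 2 ^ (-(γ * θ)) := by
            rw [hqdef, ← h2, ← Real.rpow_mul (by norm_num : (0:ℝ) ≤ 2)]
      _ = 2 ^ (ω * (1-θ) - γ * θ) := by
            rw [← Real.rpow_add two_pos]; ring_nf
      _ < 1 := Real.rpow_lt_one_of_one_lt_of_neg one_lt_two hωγ
  have h1q0 : (0:ℝ) < 1 - q := by linarith
  refine ⟨1 + Cμ * (1 - q)⁻¹, by positivity, fun k x => ?_⟩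
  set r : ℝ := δ ^ k with hrdef
  have hr : 0 < r := zpow_pos hδ0 k
  have hdx : Measurable fun z => d x z := hd_meas.comp measurable_prodMk_left
  set Vr := μ {z | d x z < r} with hVrdef
  have hVr0 : Vr ≠ 0 := (hball x r hr).1.ne'
  have hVrt : Vr ≠ ⊤ := (hball x r hr).2.ne
  set f : X → ℝ≥0∞ := fun y =>
    ((Vr + μ {z | d x z < d x y})⁻¹ * ENNReal.ofReal ((r / (r + d x y)) ^ γ)) ^ θ with hfdef
  set s : ℕ → Set X := fun j => {z | d x z < 2 ^ j * r} with hsdef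
  have hs0 : s 0 = {z | d x z < r} := by simp [hsdef]
  have hsmeas : ∀ j, MeasurableSet (s j) := fun j =>
    measurableSet_lt hdx measurable_const
  set W : ℕ → ℝ≥0∞ := fun j => μ (s j) with hWdef
  have hrj : ∀ j : ℕ, (0:ℝ) < 2 ^ j * r := fun j => mul_pos (pow_pos two_pos j) hr
  have hW0 : ∀ j, W j ≠ 0 := fun j => (hball x _ (hrj j)).1.ne'
  have hWt : ∀ j, W j ≠ ⊤ := fun j => (hball x _ (hrj j)).2.ne
  have hWV : W 0 = Vr := by
    show μ (s 0) = Vr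
    rw [hs0]
  have hdoub' : ∀ j : ℕ, W (j+1) ≤ ENNReal.ofReal Cμ * W j := by
    intro j
    have h2 : (2:ℝ) ^ (j+1) * r = 2 * (2 ^ j * r) := by ring
    have hset : s (j+1) = {z | d x z < 2 * (2 ^ j * r)} := by
      show {z | d x z < 2 ^ (j+1) * r} = _
      rw [h2]
    show μ (s (j+1)) ≤ ENNReal.ofReal Cμ * μ (s j)
    rw [hset]
    exact hdoub x _ (hrj j)
  have hWle : ∀ j : ℕ, W j ≤ ENNReal.ofReal (Cμ ^ j) * Vr := by
    intro j
    induction j with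
    | zero => simp only [pow_zero, ENNReal.ofReal_one, one_mul, hWV]; exact le_rfl
    | succ j ih =>
        calc W (j+1) ≤ ENNReal.ofReal Cμ * W j := hdoub' j
          _ ≤ ENNReal.ofReal Cμ * (ENNReal.ofReal (Cμ ^ j) * Vr) := by
              exact mul_le_mul_right ih _
          _ = ENNReal.ofReal (Cμ ^ (j+1)) * Vr := by
              rw [← mul_assoc, ← ENNReal.ofReal_mul hCμ0.le, pow_succ, mul_comm (Cμ ^ j) Cμ]
  -- covering sets
  set A : ℕ → Set X := fun j => s (j+1) \ s j with hAdef
  have hcover : (Set.univ : Set X) ⊆ s 0 ∪ ⋃ j, A j := by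
    intro y _
    have hex : ∃ n : ℕ, d x y < 2 ^ n * r := by
      obtain ⟨n, hn⟩ := pow_unbounded_of_one_lt (d x y / r) (one_lt_two (α := ℝ))
      exact ⟨n, by rwa [div_lt_iff₀ hr] at hn⟩
    rcases Nat.eq_zero_or_pos (Nat.find hex) with h0 | hpos
    · exact Or.inl (h0 ▸ Nat.find_spec hex)
    · refine Or.inr (Set.mem_iUnion.2 ?_)
      obtain ⟨j, hj⟩ : ∃ j, Nat.find hex = j + 1 :=
        ⟨Nat.find hex - 1, (Nat.succ_pred_eq_of_pos hpos).symm⟩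
      refine ⟨j, ⟨hj ▸ Nat.find_spec hex, ?_⟩⟩
      exact Nat.find_min hex (by rw [hj]; exact j.lt_succ_self)
  -- bound functions
  have hbnd0 : ∫⁻ y in s 0, f y ∂μ ≤ Vr ^ (1 - θ) := by
        have hpt : ∀ y, f y ≤ (Vr⁻¹) ^ θ := by
          intro y
          refine ENNReal.rpow_le_rpow ?_ hθ0.le
          have h1 : (Vr + μ {z | d x z < d x y})⁻¹ ≤ Vr⁻¹ :=
            ENNReal.inv_le_inv' le_self_add
          have h2 : ENNReal.ofReal ((r / (r + d x y)) ^ γ) ≤ 1 := by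
            rw [← ENNReal.ofReal_one]
            refine ENNReal.ofReal_le_ofReal ?_
            have hb : r / (r + d x y) ≤ 1 :=
              div_le_one_of_le₀ (by linarith [hd_nonneg x y]) (by linarith [hd_nonneg x y])
            calc (r / (r + d x y)) ^ γ ≤ 1 ^ γ :=
                  Real.rpow_le_rpow
                    (div_nonneg hr.le (by linarith [hd_nonneg x y])) hb hγ.le
              _ = 1 := Real.one_rpow γ
          calc (Vr + μ {z | d x z < d x y})⁻¹ * ENNReal.ofReal ((r / (r + d x y)) ^ γ)
              ≤ Vr⁻¹ * 1 := mul_le_mul' h1 h2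
            _ = Vr⁻¹ := mul_one _
        calc ∫⁻ y in s 0, f y ∂μ ≤ ∫⁻ _ in s 0, (Vr⁻¹) ^ θ ∂μ :=
              lintegral_mono hpt
          _ = (Vr⁻¹) ^ θ * μ (s 0) := setLIntegral_const _ _
          _ = (Vr⁻¹) ^ θ * Vr := by rw [hs0, ← hVrdef]
          _ = Vr ^ (1 - θ) := by
              rw [ENNReal.inv_rpow, ← ENNReal.rpow_neg, show (1:ℝ) - θ = -θ + 1 by ring,
                ENNReal.rpow_add _ _ hVr0 hVrt, ENNReal.rpow_one]
  have hbndA : ∀ j : ℕ, ∫⁻ y in A j, f y ∂μ ≤ ENNReal.ofReal (Cμ * q ^ j) * Vr ^ (1 - θ) := by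
        intro j
        have hu0 : (0:ℝ) < (((2:ℝ) ^ j)⁻¹) ^ γ := by positivity
        have hpt : ∀ y ∈ A j,
            f y ≤ ((W j)⁻¹ * ENNReal.ofReal ((((2:ℝ) ^ j)⁻¹) ^ γ)) ^ θ := by
          intro y hy
          rw [hAdef] at hy
          have hyd : 2 ^ j * r ≤ d x y := not_lt.mp hy.2
          refine ENNReal.rpow_le_rpow ?_ hθ0.le
          have h1 : (Vr + μ {z | d x z < d x y})⁻¹ ≤ (W j)⁻¹ := by
            refine ENNReal.inv_le_inv' ?_
            refine le_trans ?_ le_add_self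
            refine measure_mono ?_
            intro z hz
            exact lt_of_lt_of_le hz hyd
          have h2 : ENNReal.ofReal ((r / (r + d x y)) ^ γ) ≤
              ENNReal.ofReal ((((2:ℝ) ^ j)⁻¹) ^ γ) := by
            refine ENNReal.ofReal_le_ofReal ?_
            refine Real.rpow_le_rpow (div_nonneg hr.le (by linarith [hd_nonneg x y])) ?_ hγ.le
            rw [div_le_iff₀ (by linarith [hd_nonneg x y])]
            have : (2:ℝ) ^ j * r ≤ r + d x y := by linarith [hd_nonneg x y]
            calc r = ((2:ℝ) ^ j)⁻¹ * (2 ^ j * r) := by field_simp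
              _ ≤ ((2:ℝ) ^ j)⁻¹ * (r + d x y) := by
                  exact mul_le_mul_of_nonneg_left this (by positivity)
          exact mul_le_mul' h1 h2
        have hmeasC : MeasurableSet (A j) := (hsmeas (j+1)).diff (hsmeas j)
        have hμC : μ (A j) ≤ ENNReal.ofReal Cμ * W j := by
          refine le_trans (measure_mono ?_) (hdoub' j)
          exact Set.diff_subset
        set u : ℝ := (((2:ℝ) ^ j)⁻¹) ^ γ with hudef
        calc ∫⁻ y in A j, f y ∂μ
            ≤ ∫⁻ _ in A j, ((W j)⁻¹ * ENNReal.ofReal u) ^ θ ∂μ :=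
              setLIntegral_mono' hmeasC hpt
          _ = ((W j)⁻¹ * ENNReal.ofReal u) ^ θ * μ (A j) := setLIntegral_const _ _
          _ ≤ ((W j)⁻¹ * ENNReal.ofReal u) ^ θ * (ENNReal.ofReal Cμ * W j) :=
              mul_le_mul_right hμC _
          _ = ENNReal.ofReal Cμ * ENNReal.ofReal (u ^ θ) * (W j) ^ (1 - θ) := by
              rw [ENNReal.mul_rpow_of_nonneg _ _ hθ0.le, ENNReal.inv_rpow,
                ENNReal.ofReal_rpow_of_pos hu0]
              rw [show ((W j) ^ θ)⁻¹ * ENNReal.ofReal (u ^ θ) * (ENNReal.ofReal Cμ * W j) =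
                ENNReal.ofReal Cμ * ENNReal.ofReal (u ^ θ) * (W j * ((W j) ^ θ)⁻¹) by ring]
              congr 1
              rw [← ENNReal.rpow_neg, show (1:ℝ) - θ = 1 + -θ by ring,
                ENNReal.rpow_add _ _ (hW0 j) (hWt j), ENNReal.rpow_one]
          _ ≤ ENNReal.ofReal Cμ * ENNReal.ofReal (u ^ θ) *
                (ENNReal.ofReal (Cμ ^ j) * Vr) ^ (1 - θ) :=
              mul_le_mul_right (ENNReal.rpow_le_rpow (hWle j) hθ1') _
          _ = ENNReal.ofReal (Cμ * (u ^ θ * (Cμ ^ j) ^ (1 - θ))) * Vr ^ (1 - θ) := by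
              rw [ENNReal.mul_rpow_of_nonneg _ _ hθ1',
                ENNReal.ofReal_rpow_of_pos (pow_pos hCμ0 j),
                ENNReal.ofReal_mul hCμ0.le,
                ENNReal.ofReal_mul (Real.rpow_pos_of_pos hu0 θ).le]
              ring
          _ = ENNReal.ofReal (Cμ * q ^ j) * Vr ^ (1 - θ) := by
              congr 2
              have hswap : ∀ (a : ℝ), 0 ≤ a → ∀ t : ℝ, ((a ^ j) ^ t : ℝ) = (a ^ t) ^ j := by
                intro a ha t
                rw [← Real.rpow_natCast a j, ← Real.rpow_mul ha,
                  ← Real.rpow_natCast (a ^ t) j, ← Real.rpow_mul ha, mul_comm]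
              have h1 : u ^ θ = ((2:ℝ) ^ (-(γ * θ))) ^ j := by
                rw [hudef, ← Real.rpow_natCast (2:ℝ) j, ← Real.rpow_neg_one,
                  ← Real.rpow_mul (by norm_num : (0:ℝ) ≤ 2),
                  ← Real.rpow_mul (by norm_num : (0:ℝ) ≤ 2),
                  ← Real.rpow_mul (by norm_num : (0:ℝ) ≤ 2),
                  ← Real.rpow_natCast ((2:ℝ) ^ (-(γ * θ))) j,
                  ← Real.rpow_mul (by norm_num : (0:ℝ) ≤ 2)]
                ring_nf
              have h2 : ((Cμ ^ j) ^ (1 - θ) : ℝ) = (Cμ ^ (1 - θ)) ^ j :=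
                hswap Cμ hCμ0.le (1 - θ)
              rw [h1, h2, hqdef, mul_pow]
              ring
  -- sum the bounds
  have hgeo : (∑' j : ℕ, ENNReal.ofReal (Cμ * q ^ j)) ≤ ENNReal.ofReal (Cμ * (1 - q)⁻¹) := by
    have hco : ∀ j : ℕ, ENNReal.ofReal (Cμ * q ^ j) =
        ENNReal.ofReal Cμ * (ENNReal.ofReal q) ^ j := by
      intro j
      rw [ENNReal.ofReal_mul hCμ0.le, ENNReal.ofReal_pow hq0.le]
    rw [tsum_congr hco, ENNReal.tsum_mul_left, ENNReal.tsum_geometric]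
    have h1q : (1:ℝ≥0∞) - ENNReal.ofReal q = ENNReal.ofReal (1 - q) := by
      rw [ENNReal.ofReal_sub _ hq0.le, ENNReal.ofReal_one]
    rw [h1q, ← ENNReal.ofReal_inv_of_pos h1q0, ← ENNReal.ofReal_mul hCμ0.le]
  calc ∫⁻ y, f y ∂μ = ∫⁻ y in Set.univ, f y ∂μ := (setLIntegral_univ _).symm
    _ ≤ ∫⁻ y in s 0 ∪ ⋃ j, A j, f y ∂μ := lintegral_mono_set hcover
    _ ≤ (∫⁻ y in s 0, f y ∂μ) + ∫⁻ y in ⋃ j, A j, f y ∂μ := lintegral_union_le _ _ _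
    _ ≤ (∫⁻ y in s 0, f y ∂μ) + ∑' j, ∫⁻ y in A j, f y ∂μ :=
        add_le_add_right (lintegral_iUnion_le _ _) _
    _ ≤ Vr ^ (1 - θ) + ∑' j, ENNReal.ofReal (Cμ * q ^ j) * Vr ^ (1 - θ) :=
        add_le_add hbnd0 (ENNReal.tsum_le_tsum hbndA)
    _ = (1 + ∑' j : ℕ, ENNReal.ofReal (Cμ * q ^ j)) * Vr ^ (1 - θ) := by
        rw [ENNReal.tsum_mul_right]; ring
    _ ≤ (1 + ENNReal.ofReal (Cμ * (1 - q)⁻¹)) * Vr ^ (1 - θ) :=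
        mul_le_mul_left (add_le_add_right hgeo _) _
    _ = ENNReal.ofReal (1 + Cμ * (1 - q)⁻¹) * Vr ^ (1 - θ) := by
        rw [ENNReal.ofReal_add one_pos.le (mul_nonneg hCμ0.le (inv_nonneg.mpr h1q0.le)),
          ENNReal.ofReal_one]
end
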